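/- Assume d·γ ≤ 2·γ*. There exists c > 0, depending only on ℓ, α, m, d, J, γ, γ*, such that for every λ ∈ ℝ and every solution (u, v, w, z) of the resolvent system with data (f₁, f₂, f₄): |v(0)|² + α·|u''(0)|² ≤ c·(1 + λ²)·‖U‖·‖F‖ + c·‖F‖². -/

import Mathlib

open MeasureTheory ComplexConjugate

/-- A solution `(λ, u, v, w, z)` (with `w = v 0`, `z = v1 0`) of the resolvent system of the
hybrid Euler–Bernoulli beam with tip body, with data `(f₁, f₂, f₄)`. The fields `u1,…,u4`
(resp. `v1, v2`, `f1d, f1dd`) are the successive derivatives of `u` (resp. `v`, `f1`)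
on `[0,ℓ]`. -/
structure ResolventSol (ℓ α m d J γ γs : ℝ) where
  lam : ℝ
  u : ℝ → ℂ
  u1 : ℝ → ℂ
  u2 : ℝ → ℂ
  u3 : ℝ → ℂ
  u4 : ℝ → ℂ
  v : ℝ → ℂ
  v1 : ℝ → ℂ
  v2 : ℝ → ℂ
  f1 : ℝ → ℂ
  f1d : ℝ → ℂ
  f1dd : ℝ → ℂ
  f2 : ℝ → ℂ
  f41 : ℂ
  f42 : ℂ
  hu1 : ∀ x ∈ Set.Icc (0:ℝ) ℓ, HasDerivWithinAt u (u1 x) (Set.Icc 0 ℓ) x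
  hu2 : ∀ x ∈ Set.Icc (0:ℝ) ℓ, HasDerivWithinAt u1 (u2 x) (Set.Icc 0 ℓ) x
  hu3 : ∀ x ∈ Set.Icc (0:ℝ) ℓ, HasDerivWithinAt u2 (u3 x) (Set.Icc 0 ℓ) x
  hu4 : ∀ x ∈ Set.Icc (0:ℝ) ℓ, HasDerivWithinAt u3 (u4 x) (Set.Icc 0 ℓ) x
  hu4c : ContinuousOn u4 (Set.Icc 0 ℓ)
  hv1 : ∀ x ∈ Set.Icc (0:ℝ) ℓ, HasDerivWithinAt v (v1 x) (Set.Icc 0 ℓ) x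
  hv2 : ∀ x ∈ Set.Icc (0:ℝ) ℓ, HasDerivWithinAt v1 (v2 x) (Set.Icc 0 ℓ) x
  hv2c : ContinuousOn v2 (Set.Icc 0 ℓ)
  hf11 : ∀ x ∈ Set.Icc (0:ℝ) ℓ, HasDerivWithinAt f1 (f1d x) (Set.Icc 0 ℓ) x
  hf12 : ∀ x ∈ Set.Icc (0:ℝ) ℓ, HasDerivWithinAt f1d (f1dd x) (Set.Icc 0 ℓ) x
  hf1c : ContinuousOn f1dd (Set.Icc 0 ℓ)
  hf2c : ContinuousOn f2 (Set.Icc 0 ℓ)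
  res1 : ∀ x ∈ Set.Icc (0:ℝ) ℓ, Complex.I * (lam : ℂ) * u x - v x = f1 x
  res2 : ∀ x ∈ Set.Icc (0:ℝ) ℓ, Complex.I * (lam : ℂ) * v x + (α : ℂ) * u4 x = f2 x
  res3 : Complex.I * (lam : ℂ) * ((m : ℂ) * v 0 + (m : ℂ) * (d : ℂ) * v1 0) +
      (γ : ℂ) * v 0 + (α : ℂ) * u3 0 = (m : ℂ) * f41 + (m : ℂ) * (d : ℂ) * f42
  res4 : Complex.I * (lam : ℂ) * ((m : ℂ) * (d : ℂ) * v 0 +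
        ((J : ℂ) + (m : ℂ) * (d : ℂ) ^ 2) * v1 0) +
      (d : ℂ) * (γ : ℂ) * v 0 + (d : ℂ) * (γs : ℂ) * v1 0 - (α : ℂ) * u2 0 =
      (m : ℂ) * (d : ℂ) * f41 + ((J : ℂ) + (m : ℂ) * (d : ℂ) ^ 2) * f42
  bcu : u ℓ = 0
  bcu1 : u1 ℓ = 0
  bcv : v ℓ = 0
  bcv1 : v1 ℓ = 0

variable {ℓ α m d J γ γs : ℝ}

/-- The phase-space norm `‖U‖` of a resolvent solution. -/
noncomputable def normU (R : ResolventSol ℓ α m d J γ γs) : ℝ :=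
  Real.sqrt ((∫ x in (0:ℝ)..ℓ, (‖R.v x‖ ^ 2 + α * ‖R.u2 x‖ ^ 2)) +
    m * ‖R.v 0‖ ^ 2 + 2 * m * d * (R.v 0 * conj (R.v1 0)).re +
    (J + m * d ^ 2) * ‖R.v1 0‖ ^ 2)

/-- The phase-space norm `‖F‖` of the data of a resolvent solution. -/
noncomputable def normF (R : ResolventSol ℓ α m d J γ γs) : ℝ :=
  Real.sqrt ((∫ x in (0:ℝ)..ℓ, (‖R.f2 x‖ ^ 2 + α * ‖R.f1dd x‖ ^ 2)) +
    m * ‖R.f41‖ ^ 2 + 2 * m * d * (R.f41 * conj R.f42).re +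
    (J + m * d ^ 2) * ‖R.f42‖ ^ 2)

section helpers


private lemma sum6_sq (x1 x2 x3 x4 x5 x6 : ℝ) :
    (x1+x2+x3+x4+x5+x6)^2 ≤ 6*(x1^2+x2^2+x3^2+x4^2+x5^2+x6^2) := by
  nlinarith [sq_nonneg (x1-x2), sq_nonneg (x1-x3), sq_nonneg (x1-x4), sq_nonneg (x1-x5),
    sq_nonneg (x1-x6), sq_nonneg (x2-x3), sq_nonneg (x2-x4), sq_nonneg (x2-x5),
    sq_nonneg (x2-x6), sq_nonneg (x3-x4), sq_nonneg (x3-x5), sq_nonneg (x3-x6),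
    sq_nonneg (x4-x5), sq_nonneg (x4-x6), sq_nonneg (x5-x6)]

private lemma normsq_comp (z : ℂ) : ‖z‖^2 = z.re^2 + z.im^2 := by
  rw [Complex.sq_norm, Complex.normSq_apply]; ring

private lemma quad_aux (α t : ℝ) (hα : 0 ≤ α) (a b e f : ℂ) :
    0 ≤ t^2*(‖b‖^2 + α*‖f‖^2) + 2*t*((b*conj a).re + α*(e*conj f).re)
      + (‖a‖^2 + α*‖e‖^2) := by
  simp only [normsq_comp, Complex.mul_re, Complex.conj_re, Complex.conj_im]
  nlinarith [sq_nonneg (a.re + t*b.re), sq_nonneg (a.im + t*b.im),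
    mul_nonneg hα (sq_nonneg (e.re + t*f.re)), mul_nonneg hα (sq_nonneg (e.im + t*f.im))]

private lemma tip_quad_aux (m d J t : ℝ) (hm : 0 ≤ m) (hJ : 0 ≤ J)
    (w z g1 g2 : ℂ) :
    0 ≤ t^2*(m*‖g1‖^2 + 2*m*d*(g1*conj g2).re + (J+m*d^2)*‖g2‖^2)
      + 2*t*(m*(g1*conj w).re + m*d*((g2*conj w).re + (g1*conj z).re) + (J+m*d^2)*(g2*conj z).re)
      + (m*‖w‖^2 + 2*m*d*(w*conj z).re + (J+m*d^2)*‖z‖^2) := by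
  simp only [normsq_comp, Complex.mul_re, Complex.conj_re, Complex.conj_im]
  nlinarith [mul_nonneg hm (sq_nonneg (w.re + t*g1.re + d*(z.re + t*g2.re))),
    mul_nonneg hm (sq_nonneg (w.im + t*g1.im + d*(z.im + t*g2.im))),
    mul_nonneg hJ (sq_nonneg (z.re + t*g2.re)), mul_nonneg hJ (sq_nonneg (z.im + t*g2.im))]


private lemma norm_add6 (z1 z2 z3 z4 z5 z6 : ℂ) :
    ‖z1+z2+z3+z4+z5+z6‖ ≤ ‖z1‖+‖z2‖+‖z3‖+‖z4‖+‖z5‖+‖z6‖ := by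
  have a1 := norm_add_le (z1+z2+z3+z4+z5) z6
  have a2 := norm_add_le (z1+z2+z3+z4) z5
  have a3 := norm_add_le (z1+z2+z3) z4
  have a4 := norm_add_le (z1+z2) z3
  have a5 := norm_add_le z1 z2
  linarith


private lemma six_term (X s1 s2 s3 s4 s5 s6 : ℝ) (hX : 0 ≤ X) (h : X ≤ s1+s2+s3+s4+s5+s6) :
    X^2 ≤ 6*(s1^2+s2^2+s3^2+s4^2+s5^2+s6^2) := by
  nlinarith [sum6_sq s1 s2 s3 s4 s5 s6, pow_le_pow_left₀ hX h 2]

private lemma diss_bound_a (γ d γs P a b : ℝ) (hγ : 0 < γ) (hd : 0 < d) (hγs : 0 < γs)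
    (hyp : d*γ ≤ 2*γs) (hP : 0 ≤ P) (hD2 : γ*a^2 - d*γ*(a*b) + d*γs*b^2 ≤ P) :
    γ*a^2 ≤ 2*P := by
  have hkey : (0:ℝ) ≤ d*γ*(2*γs - d*γ)*b^2 :=
    mul_nonneg (mul_nonneg (by positivity) (by linarith)) (sq_nonneg _)
  nlinarith [hD2, hkey, sq_nonneg (γ*a - d*γ*b), hγ, hP]

private lemma diss_bound_b (γ d γs P a b : ℝ) (hγ : 0 < γ) (hd : 0 < d) (hγs : 0 < γs)
    (hyp : d*γ ≤ 2*γs) (hP : 0 ≤ P) (hD2 : γ*a^2 - d*γ*(a*b) + d*γs*b^2 ≤ P) :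
    d*γs*b^2 ≤ 2*P := by
  have hkey : (0:ℝ) ≤ d*γ*(2*γs - d*γ)*b^2 :=
    mul_nonneg (mul_nonneg (by positivity) (by linarith)) (sq_nonneg _)
  nlinarith [hD2, hkey, sq_nonneg (2*γ*a - d*γ*b), hγ, hP]

private lemma data_bound (m d J NF F1 F2 cF : ℝ) (hm : 0 < m) (hd : 0 < d) (hJ : 0 < J)
    (hcF : -(F1*F2) ≤ cF) (hTF : m*F1^2 + 2*m*d*cF + (J+m*d^2)*F2^2 ≤ NF) :
    F1^2 ≤ (2*m⁻¹ + 2*d^2*J⁻¹)*NF ∧ F2^2 ≤ J⁻¹*NF := by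
  have hprod : (0:ℝ) ≤ m*d*(cF + F1*F2) := mul_nonneg (by positivity) (by linarith)
  have h5a : m*(F1 - d*F2)^2 + J*F2^2 ≤ NF := by nlinarith [hTF, hprod]
  have hA1 : (F1 - d*F2)^2 ≤ NF/m := by
    rw [le_div_iff₀ hm]; nlinarith [h5a, mul_nonneg hJ.le (sq_nonneg F2)]
  have hA2 : F2^2 ≤ NF/J := by
    rw [le_div_iff₀ hJ]; nlinarith [h5a, mul_nonneg hm.le (sq_nonneg (F1 - d*F2))]
  constructor
  · have hdA2 : d^2*F2^2 ≤ d^2*(NF/J) := mul_le_mul_of_nonneg_left hA2 (sq_nonneg d)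
    have hx : F1^2 ≤ 2*(F1 - d*F2)^2 + 2*(d^2*F2^2) := by
      nlinarith [sq_nonneg (F1 - 2*d*F2)]
    have e : (2*m⁻¹ + 2*d^2*J⁻¹)*NF = 2*(NF/m) + 2*(d^2*(NF/J)) := by ring
    rw [e]; linarith only [hx, hA1, hdA2]
  · have e : J⁻¹*NF = NF/J := by ring
    rw [e]; exact hA2

end helpers

/-- Boundary energy estimate for the resolvent system:
`|v(0)|² + α|u''(0)|² ≤ c (1 + λ²) ‖U‖ ‖F‖ + c ‖F‖²`. -/

theorem resolvent_boundary_energy (ℓ α m d J γ γs : ℝ)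
    (hℓ : 0 < ℓ) (hα : 0 < α) (hm : 0 < m) (hd : 0 < d) (hJ : 0 < J)
    (hγ : 0 < γ) (hγs : 0 < γs) (hyp : d * γ ≤ 2 * γs) :
    ∃ c > 0, ∀ R : ResolventSol ℓ α m d J γ γs,
      ‖R.v 0‖ ^ 2 + α * ‖R.u2 0‖ ^ 2 ≤
        c * (1 + R.lam ^ 2) * normU R * normF R + c * (normF R) ^ 2 := by
  refine ⟨2*γ⁻¹ + (6*((m*d)^2*(2*γ⁻¹) + (J+m*d^2)^2*(2*(d*γs)⁻¹))
      + 6*(d^2*γ^2*(2*γ⁻¹) + d^2*γs^2*(2*(d*γs)⁻¹))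
      + 6*((m*d)^2*(2*m⁻¹+2*d^2*J⁻¹) + (J+m*d^2)^2*J⁻¹))*α⁻¹, by positivity, ?_⟩
  intro R
  obtain ⟨lam,u,u1,u2,u3,u4,v,v1,v2,f1,f1d,f1dd,f2,f41,f42,hu1,hu2,hu3,hu4,hu4c,hv1,hv2,hv2c,hf11,hf12,hf1c,hf2c,res1,res2,res3,res4,bcu,bcu1,bcv,bcv1⟩ := R
  simp only [normU, normF]
  have h0mem : (0:ℝ) ∈ Set.Icc (0:ℝ) ℓ := ⟨le_refl _, hℓ.le⟩
  have huIcc : Set.uIcc (0:ℝ) ℓ = Set.Icc (0:ℝ) ℓ := Set.uIcc_of_le hℓ.le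
  -- continuity facts
  have hcu2 : ContinuousOn u2 (Set.Icc (0:ℝ) ℓ) := fun x hx => (hu3 x hx).continuousWithinAt
  have hcu3 : ContinuousOn u3 (Set.Icc (0:ℝ) ℓ) := fun x hx => (hu4 x hx).continuousWithinAt
  have hcv : ContinuousOn v (Set.Icc (0:ℝ) ℓ) := fun x hx => (hv1 x hx).continuousWithinAt
  have hcv1 : ContinuousOn v1 (Set.Icc (0:ℝ) ℓ) := fun x hx => (hv2 x hx).continuousWithinAt
  -- Step 1 : derived identities for derivatives
  have key1 : ∀ x ∈ Set.Icc (0:ℝ) ℓ, f1d x = Complex.I * (lam:ℂ) * u1 x - v1 x := by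
    intro x hx
    have hg : HasDerivWithinAt (fun y => Complex.I * (lam:ℂ) * u y - v y)
        (Complex.I * (lam:ℂ) * u1 x - v1 x) (Set.Icc 0 ℓ) x :=
      ((hu1 x hx).const_mul _).sub (hv1 x hx)
    have hg' : HasDerivWithinAt f1 (Complex.I * (lam:ℂ) * u1 x - v1 x) (Set.Icc 0 ℓ) x :=
      hg.congr (fun y hy => (res1 y hy).symm) (res1 x hx).symm
    exact (uniqueDiffOn_Icc hℓ x hx).eq_deriv _ (hf11 x hx) hg'
  have key2 : ∀ x ∈ Set.Icc (0:ℝ) ℓ, v2 x = Complex.I * (lam:ℂ) * u2 x - f1dd x := by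
    intro x hx
    have hg : HasDerivWithinAt (fun y => Complex.I * (lam:ℂ) * u1 y - v1 y)
        (Complex.I * (lam:ℂ) * u2 x - v2 x) (Set.Icc 0 ℓ) x :=
      ((hu2 x hx).const_mul _).sub (hv2 x hx)
    have hg' : HasDerivWithinAt f1d (Complex.I * (lam:ℂ) * u2 x - v2 x) (Set.Icc 0 ℓ) x :=
      hg.congr (fun y hy => (key1 y hy)) (key1 x hx)
    have := (uniqueDiffOn_Icc hℓ x hx).eq_deriv _ (hf12 x hx) hg'
    linear_combination this

  -- Step 2 : FTC for H(x) = α u3 conj v - α u2 conj v1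
  set K : ℂ := Complex.I * (lam:ℂ) with hK
  have hconjv : ∀ x ∈ Set.Icc (0:ℝ) ℓ,
      HasDerivWithinAt (fun y => conj (v y)) (conj (v1 x)) (Set.Icc 0 ℓ) x :=
    fun x hx => (hv1 x hx).star
  have hconjv1 : ∀ x ∈ Set.Icc (0:ℝ) ℓ,
      HasDerivWithinAt (fun y => conj (v1 y)) (conj (v2 x)) (Set.Icc 0 ℓ) x :=
    fun x hx => (hv2 x hx).star
  set H : ℝ → ℂ := fun x => (α:ℂ) * (u3 x * conj (v x)) - (α:ℂ) * (u2 x * conj (v1 x)) with hHdef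
  set H' : ℝ → ℂ := fun x => (α:ℂ) * (u4 x * conj (v x)) - (α:ℂ) * (u2 x * conj (v2 x)) with hH'def
  have hH : ∀ x ∈ Set.Icc (0:ℝ) ℓ, HasDerivWithinAt H (H' x) (Set.Icc 0 ℓ) x := by
    intro x hx
    have hA : HasDerivWithinAt (fun y => u3 y * conj (v y))
        (u4 x * conj (v x) + u3 x * conj (v1 x)) (Set.Icc 0 ℓ) x :=
      (hu4 x hx).mul (hconjv x hx)
    have hB : HasDerivWithinAt (fun y => u2 y * conj (v1 y))
        (u3 x * conj (v1 x) + u2 x * conj (v2 x)) (Set.Icc 0 ℓ) x :=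
      (hu3 x hx).mul (hconjv1 x hx)
    have h := (hA.const_mul ((α:ℂ))).sub (hB.const_mul ((α:ℂ)))
    convert h using 1
    · rfl
    · rfl
    · simp only [hH'def]; ring
  have hconjvC : ContinuousOn (fun y => conj (v y)) (Set.Icc (0:ℝ) ℓ) := hcv.star
  have hconjv2C : ContinuousOn (fun y => conj (v2 y)) (Set.Icc (0:ℝ) ℓ) := hv2c.star
  have hH'c : ContinuousOn H' (Set.Icc (0:ℝ) ℓ) := by
    apply ContinuousOn.sub
    · exact continuousOn_const.mul (hu4c.mul hconjvC)
    · exact continuousOn_const.mul (hcu2.mul hconjv2C)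
  have hft : (∫ x in (0:ℝ)..ℓ, H' x) = H ℓ - H 0 := by
    apply intervalIntegral.integral_eq_sub_of_hasDeriv_right_of_le hℓ.le
      (fun x hx => (hH x hx).continuousWithinAt)
    · intro x hx
      exact ((hH x (Set.mem_Icc_of_Ioo hx)).hasDerivAt
        (Icc_mem_nhds hx.1 hx.2)).hasDerivWithinAt
    · exact (huIcc ▸ hH'c).intervalIntegrable
  have hHl : H ℓ = 0 := by simp [hHdef, bcv, bcv1]

  -- Step 3 : rewrite the integrand using the resolvent equations
  have hptwise : ∀ x ∈ Set.Icc (0:ℝ) ℓ, H' x =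
      f2 x * conj (v x) - K * (v x * conj (v x)) + K * (α:ℂ) * (u2 x * conj (u2 x))
        + (α:ℂ) * (u2 x * conj (f1dd x)) := by
    intro x hx
    have e2 := res2 x hx
    have e1c := congrArg conj (key2 x hx)
    simp only [hK, map_sub, map_mul, Complex.conj_I, Complex.conj_ofReal] at e1c
    simp only [hH'def, hK]
    linear_combination (conj (v x)) * e2 + (-(α:ℂ) * u2 x) * e1c
  set E1 : ℂ := ∫ x in (0:ℝ)..ℓ, f2 x * conj (v x) with hE1
  set E2 : ℂ := ∫ x in (0:ℝ)..ℓ, u2 x * conj (f1dd x) with hE2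
  set Br : ℝ := ∫ x in (0:ℝ)..ℓ, ‖v x‖^2 with hBr
  set Cr : ℝ := ∫ x in (0:ℝ)..ℓ, ‖u2 x‖^2 with hCr
  have hconjf1ddC : ContinuousOn (fun y => conj (f1dd y)) (Set.Icc (0:ℝ) ℓ) := hf1c.star
  have hconju2C : ContinuousOn (fun y => conj (u2 y)) (Set.Icc (0:ℝ) ℓ) := hcu2.star
  have int1 : IntervalIntegrable (fun x => f2 x * conj (v x)) volume 0 ℓ :=
    (huIcc ▸ (hf2c.mul hconjvC)).intervalIntegrable
  have int2 : IntervalIntegrable (fun x => u2 x * conj (f1dd x)) volume 0 ℓ :=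
    (huIcc ▸ (hcu2.mul hconjf1ddC)).intervalIntegrable
  have int3 : IntervalIntegrable (fun x => v x * conj (v x)) volume 0 ℓ :=
    (huIcc ▸ (hcv.mul hconjvC)).intervalIntegrable
  have int4 : IntervalIntegrable (fun x => u2 x * conj (u2 x)) volume 0 ℓ :=
    (huIcc ▸ (hcu2.mul hconju2C)).intervalIntegrable
  have hsplit : (∫ x in (0:ℝ)..ℓ, H' x)
      = E1 - K * ((Br:ℂ)) + K * (α:ℂ) * ((Cr:ℂ)) + (α:ℂ) * E2 := by
    have hcongr : (∫ x in (0:ℝ)..ℓ, H' x) = ∫ x in (0:ℝ)..ℓ,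
        (f2 x * conj (v x) - K * (v x * conj (v x)) + K * (α:ℂ) * (u2 x * conj (u2 x))
          + (α:ℂ) * (u2 x * conj (f1dd x))) := by
      apply intervalIntegral.integral_congr
      intro x hx
      exact hptwise x (huIcc ▸ hx)
    rw [hcongr]
    have hvv : (∫ x in (0:ℝ)..ℓ, v x * conj (v x)) = ((Br:ℂ)) := by
      rw [hBr, ← intervalIntegral.integral_ofReal]
      apply intervalIntegral.integral_congr
      intro x _
      simp [Complex.mul_conj, Complex.normSq_eq_norm_sq]
    have huu : (∫ x in (0:ℝ)..ℓ, u2 x * conj (u2 x)) = ((Cr:ℂ)) := by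
      rw [hCr, ← intervalIntegral.integral_ofReal]
      apply intervalIntegral.integral_congr
      intro x _
      simp [Complex.mul_conj, Complex.normSq_eq_norm_sq]
    rw [intervalIntegral.integral_add, intervalIntegral.integral_add,
      intervalIntegral.integral_sub, intervalIntegral.integral_const_mul,
      intervalIntegral.integral_const_mul, intervalIntegral.integral_const_mul,
      hvv, huu]
    · exact int1
    · exact int3.const_mul _
    · exact (int1.sub (int3.const_mul _))
    · exact int4.const_mul _
    · exact ((int1.sub (int3.const_mul _)).add (int4.const_mul _))
    · exact int2.const_mul _
  have F1eq : E1 - K * ((Br:ℂ)) + K * (α:ℂ) * ((Cr:ℂ)) + (α:ℂ) * E2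
      = -((α:ℂ) * (u3 0 * conj (v 0)) - (α:ℂ) * (u2 0 * conj (v1 0))) := by
    rw [← hsplit, hft, hHl, zero_sub, hHdef]

  clear_value K H H' Br Cr
  -- Step 4 : tip equation and the dissipation identity
  have F2eq : K*((m:ℂ)*(v 0 * conj (v 0)) + (m:ℂ)*(d:ℂ)*(v1 0 * conj (v 0))
        + (m:ℂ)*(d:ℂ)*(v 0 * conj (v1 0)) + ((J:ℂ)+(m:ℂ)*(d:ℂ)^2)*(v1 0 * conj (v1 0)))
      + (γ:ℂ)*(v 0 * conj (v 0)) + (α:ℂ)*(u3 0 * conj (v 0))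
      + (d:ℂ)*(γ:ℂ)*(v 0 * conj (v1 0)) + (d:ℂ)*(γs:ℂ)*(v1 0 * conj (v1 0))
      - (α:ℂ)*(u2 0 * conj (v1 0))
      = ((m:ℂ)*f41 + (m:ℂ)*(d:ℂ)*f42) * conj (v 0)
        + ((m:ℂ)*(d:ℂ)*f41 + ((J:ℂ)+(m:ℂ)*(d:ℂ)^2)*f42) * conj (v1 0) := by
    linear_combination (conj (v 0)) * res3 + (conj (v1 0)) * res4
  have hDS : γ*‖v 0‖^2 + d*γ*((v 0) * conj (v1 0)).re + d*γs*‖v1 0‖^2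
      = E1.re + α*E2.re
        + (m*(f41 * conj (v 0)).re + m*d*((f42 * conj (v 0)).re + (f41 * conj (v1 0)).re)
          + (J+m*d^2)*(f42 * conj (v1 0)).re) := by
    have hre1 := congrArg Complex.re F1eq
    have hre2 := congrArg Complex.re F2eq
    simp only [hK, Complex.add_re, Complex.sub_re, Complex.neg_re, Complex.mul_re,
      Complex.mul_im, Complex.add_im, Complex.sub_im, Complex.neg_im, Complex.I_re,
      Complex.I_im, Complex.ofReal_re, Complex.ofReal_im, Complex.conj_re, Complex.conj_im,
      ← Complex.ofReal_pow, Complex.ofReal_add, zero_mul, one_mul, mul_zero, zero_sub,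
      sub_zero, zero_add, neg_neg, neg_zero, mul_neg, neg_mul, add_zero] at hre1 hre2
    simp only [normsq_comp, Complex.mul_re, Complex.conj_re, Complex.conj_im]
    linear_combination - hre1 + hre2

  -- Step 5 : Cauchy-Schwarz via the quadratic in t
  have hre_cont : ∀ {g : ℝ → ℂ}, ContinuousOn g (Set.Icc (0:ℝ) ℓ) →
      ContinuousOn (fun x => (g x).re) (Set.Icc (0:ℝ) ℓ) := by
    intro g hg
    exact Complex.continuous_re.comp_continuousOn hg
  set NUi : ℝ := ∫ x in (0:ℝ)..ℓ, (‖v x‖^2 + α*‖u2 x‖^2) with hNUi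
  set NFi : ℝ := ∫ x in (0:ℝ)..ℓ, (‖f2 x‖^2 + α*‖f1dd x‖^2) with hNFi
  set Si : ℝ := ∫ x in (0:ℝ)..ℓ, ((f2 x * conj (v x)).re + α*(u2 x * conj (f1dd x)).re)
    with hSi_def
  clear_value NUi NFi Si
  have intre1 : IntervalIntegrable (fun x => (f2 x * conj (v x)).re) volume 0 ℓ :=
    (huIcc ▸ (hre_cont (hf2c.mul hconjvC))).intervalIntegrable
  have intre2 : IntervalIntegrable (fun x => (u2 x * conj (f1dd x)).re) volume 0 ℓ :=
    (huIcc ▸ (hre_cont (hcu2.mul hconjf1ddC))).intervalIntegrable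
  have intnv : IntervalIntegrable (fun x => ‖v x‖^2) volume 0 ℓ :=
    (huIcc ▸ ((hcv.norm.pow 2))).intervalIntegrable
  have intnu2 : IntervalIntegrable (fun x => ‖u2 x‖^2) volume 0 ℓ :=
    (huIcc ▸ ((hcu2.norm.pow 2))).intervalIntegrable
  have intnf2 : IntervalIntegrable (fun x => ‖f2 x‖^2) volume 0 ℓ :=
    (huIcc ▸ ((hf2c.norm.pow 2))).intervalIntegrable
  have intnf1dd : IntervalIntegrable (fun x => ‖f1dd x‖^2) volume 0 ℓ :=
    (huIcc ▸ ((hf1c.norm.pow 2))).intervalIntegrable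
  have hSi : Si = E1.re + α*E2.re := by
    have h1 : E1.re = ∫ x in (0:ℝ)..ℓ, (f2 x * conj (v x)).re := by
      have := Complex.reCLM.intervalIntegral_comp_comm int1
      simpa using this.symm
    have h2 : E2.re = ∫ x in (0:ℝ)..ℓ, (u2 x * conj (f1dd x)).re := by
      have := Complex.reCLM.intervalIntegral_comp_comm int2
      simpa using this.symm
    rw [hSi_def, h1, h2, intervalIntegral.integral_add intre1 (intre2.const_mul α),
      intervalIntegral.integral_const_mul]
  clear_value E1 E2
  set NUarg : ℝ := NUi + m*‖v 0‖^2 + 2*m*d*((v 0) * conj (v1 0)).re + (J+m*d^2)*‖v1 0‖^2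
    with hNUarg
  set NFarg : ℝ := NFi + m*‖f41‖^2 + 2*m*d*(f41 * conj f42).re + (J+m*d^2)*‖f42‖^2
    with hNFarg
  set Sfull : ℝ := Si + (m*(f41 * conj (v 0)).re
      + m*d*((f42 * conj (v 0)).re + (f41 * conj (v1 0)).re)
      + (J+m*d^2)*(f42 * conj (v1 0)).re) with hSfull
  clear_value NUarg NFarg Sfull
  have hquad : ∀ t : ℝ, 0 ≤ NFarg*t^2 + 2*Sfull*t + NUarg := by
    intro t
    have hint : NFi*t^2 + 2*Si*t + NUi = ∫ x in (0:ℝ)..ℓ,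
        (t^2*(‖f2 x‖^2 + α*‖f1dd x‖^2)
          + 2*t*((f2 x * conj (v x)).re + α*(u2 x * conj (f1dd x)).re)
          + (‖v x‖^2 + α*‖u2 x‖^2)) := by
      have ig1 : IntervalIntegrable (fun x => ‖f2 x‖^2 + α*‖f1dd x‖^2) volume 0 ℓ :=
        intnf2.add (intnf1dd.const_mul α)
      have ig2 : IntervalIntegrable
          (fun x => (f2 x * conj (v x)).re + α*(u2 x * conj (f1dd x)).re) volume 0 ℓ :=
        intre1.add (intre2.const_mul α)
      have ig3 : IntervalIntegrable (fun x => ‖v x‖^2 + α*‖u2 x‖^2) volume 0 ℓ :=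
        intnv.add (intnu2.const_mul α)
      rw [intervalIntegral.integral_add ((ig1.const_mul _).add (ig2.const_mul _)) ig3,
        intervalIntegral.integral_add (ig1.const_mul _) (ig2.const_mul _),
        intervalIntegral.integral_const_mul, intervalIntegral.integral_const_mul]
      rw [hNUi, hNFi, hSi_def]
      ring
    have hintnn : (0:ℝ) ≤ NFi*t^2 + 2*Si*t + NUi := by
      rw [hint]
      apply intervalIntegral.integral_nonneg hℓ.le
      intro x _
      exact quad_aux α t hα.le (v x) (f2 x) (u2 x) (f1dd x)
    have htip := tip_quad_aux m d J t hm.le hJ.le (v 0) (v1 0) f41 f42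
    rw [hNFarg, hSfull, hNUarg]
    linarith only [hintnn, htip]
  have hNU0 : 0 ≤ NUarg := by have := hquad 0; simpa using this
  have hNFi0 : (0:ℝ) ≤ NFi := by
    rw [hNFi]
    apply intervalIntegral.integral_nonneg hℓ.le
    intro x _
    positivity
  have hNF0 : 0 ≤ NFarg := by
    have htp := tip_quad_aux m d J 0 hm.le hJ.le f41 f42 0 0
    rw [hNFarg]
    linarith only [hNFi0, htp]
  have hCS : Sfull ≤ Real.sqrt NUarg * Real.sqrt NFarg := by
    have hd0 : discrim NFarg (2*Sfull) NUarg ≤ 0 := by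
      apply discrim_le_zero
      intro x
      have hq := hquad x
      linarith only [hq]
    rw [discrim] at hd0
    have hsq : Sfull^2 ≤ NUarg * NFarg := by linarith only [hd0]
    calc Sfull ≤ |Sfull| := le_abs_self _
      _ = Real.sqrt (Sfull^2) := (Real.sqrt_sq_eq_abs _).symm
      _ ≤ Real.sqrt (NUarg * NFarg) := Real.sqrt_le_sqrt hsq
      _ = Real.sqrt NUarg * Real.sqrt NFarg := Real.sqrt_mul hNU0 _
  have hDlow : γ*‖v 0‖^2 + d*γ*((v 0) * conj (v1 0)).re + d*γs*‖v1 0‖^2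
      ≤ Real.sqrt NUarg * Real.sqrt NFarg := by
    rw [hDS]
    calc E1.re + α*E2.re + (m*(f41 * conj (v 0)).re
          + m*d*((f42 * conj (v 0)).re + (f41 * conj (v1 0)).re)
          + (J+m*d^2)*(f42 * conj (v1 0)).re) = Sfull := by rw [hSfull, hSi]
      _ ≤ Real.sqrt NUarg * Real.sqrt NFarg := hCS

  -- Step 6 : bounds on w and z from dissipation
  have hM0 : 0 ≤ Real.sqrt NUarg * Real.sqrt NFarg :=
    mul_nonneg (Real.sqrt_nonneg _) (Real.sqrt_nonneg _)
  have hcre : -(‖v 0‖*‖v1 0‖) ≤ ((v 0) * conj (v1 0)).re := by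
    have h1 : |((v 0) * conj (v1 0)).re| ≤ ‖(v 0) * conj (v1 0)‖ := by
      exact Complex.abs_re_le_norm _
    have h2 : ‖(v 0) * conj (v1 0)‖ = ‖v 0‖*‖v1 0‖ := by
      rw [norm_mul, RCLike.norm_conj]
    rw [h2] at h1
    linarith [neg_abs_le (((v 0) * conj (v1 0)).re)]
  have hD2 : γ*‖v 0‖^2 - d*γ*(‖v 0‖*‖v1 0‖) + d*γs*‖v1 0‖^2
      ≤ Real.sqrt NUarg * Real.sqrt NFarg := by
    have hscale : d*γ*(-(‖v 0‖*‖v1 0‖)) ≤ d*γ*((v 0) * conj (v1 0)).re :=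
      mul_le_mul_of_nonneg_left hcre (by positivity)
    linarith only [hDlow, hscale]
  have hwa : γ*‖v 0‖^2 ≤ 2*(Real.sqrt NUarg * Real.sqrt NFarg) :=
    diss_bound_a γ d γs _ ‖v 0‖ ‖v1 0‖ hγ hd hγs hyp hM0 hD2
  have hzb : d*γs*‖v1 0‖^2 ≤ 2*(Real.sqrt NUarg * Real.sqrt NFarg) :=
    diss_bound_b γ d γs _ ‖v 0‖ ‖v1 0‖ hγ hd hγs hyp hM0 hD2
  have haM : ‖v 0‖^2 ≤ 2*γ⁻¹*(Real.sqrt NUarg * Real.sqrt NFarg) := by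
    rw [show 2*γ⁻¹*(Real.sqrt NUarg * Real.sqrt NFarg)
      = 2*(Real.sqrt NUarg * Real.sqrt NFarg)/γ by ring, le_div_iff₀ hγ]
    linarith only [hwa]
  have hbM : ‖v1 0‖^2 ≤ 2*(d*γs)⁻¹*(Real.sqrt NUarg * Real.sqrt NFarg) := by
    rw [show 2*(d*γs)⁻¹*(Real.sqrt NUarg * Real.sqrt NFarg)
      = 2*(Real.sqrt NUarg * Real.sqrt NFarg)/(d*γs) by ring, le_div_iff₀ (by positivity)]
    linarith only [hzb]
  -- Step 7 : bounds on the data f41 f42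
  have hcreF : -(‖f41‖*‖f42‖) ≤ (f41 * conj f42).re := by
    have h1 : |(f41 * conj f42).re| ≤ ‖f41 * conj f42‖ := by
      exact Complex.abs_re_le_norm _
    have h2 : ‖f41 * conj f42‖ = ‖f41‖*‖f42‖ := by rw [norm_mul, RCLike.norm_conj]
    rw [h2] at h1
    linarith [neg_abs_le ((f41 * conj f42).re)]
  have hTF : m*‖f41‖^2 + 2*m*d*(f41 * conj f42).re + (J+m*d^2)*‖f42‖^2 ≤ NFarg := by
    rw [hNFarg]; linarith only [hNFi0]
  have hdata := data_bound m d J NFarg ‖f41‖ ‖f42‖ ((f41 * conj f42).re) hm hd hJ hcreF hTF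
  have p5 := hdata.1
  have p6 := hdata.2
  -- Step 8 : bound on α u2 0 from res4
  have hres4' : (α:ℂ)*u2 0 = K*((m:ℂ)*(d:ℂ)*v 0) + K*(((J:ℂ)+(m:ℂ)*(d:ℂ)^2)*v1 0)
      + (d:ℂ)*(γ:ℂ)*v 0 + (d:ℂ)*(γs:ℂ)*v1 0 + (-((m:ℂ)*(d:ℂ)*f41))
      + (-(((J:ℂ)+(m:ℂ)*(d:ℂ)^2)*f42)) := by
    linear_combination - res4
  have hnormK : ‖K‖ = |lam| := by
    rw [hK, norm_mul, Complex.norm_I, one_mul, Complex.norm_real, Real.norm_eq_abs]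
  have hcJm : ((J:ℂ)+(m:ℂ)*(d:ℂ)^2) = ((J+m*d^2 : ℝ):ℂ) := by push_cast; ring
  have hnJm : ‖((J:ℂ)+(m:ℂ)*(d:ℂ)^2)‖ = J+m*d^2 := by
    rw [hcJm, Complex.norm_real, Real.norm_eq_abs, abs_of_pos (by positivity)]
  have e1 : ‖K*((m:ℂ)*(d:ℂ)*v 0)‖ = |lam| * ((m*d)*‖v 0‖) := by
    rw [norm_mul, hnormK, norm_mul, norm_mul, Complex.norm_real, Complex.norm_real,
      Real.norm_eq_abs, Real.norm_eq_abs, abs_of_pos hm, abs_of_pos hd]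
  have e2 : ‖K*(((J:ℂ)+(m:ℂ)*(d:ℂ)^2)*v1 0)‖ = |lam| * ((J+m*d^2)*‖v1 0‖) := by
    rw [norm_mul, hnormK, norm_mul, hnJm]
  have e3 : ‖(d:ℂ)*(γ:ℂ)*v 0‖ = d*γ*‖v 0‖ := by
    rw [norm_mul, norm_mul, Complex.norm_real, Complex.norm_real, Real.norm_eq_abs,
      Real.norm_eq_abs, abs_of_pos hd, abs_of_pos hγ]
  have e4 : ‖(d:ℂ)*(γs:ℂ)*v1 0‖ = d*γs*‖v1 0‖ := by
    rw [norm_mul, norm_mul, Complex.norm_real, Complex.norm_real, Real.norm_eq_abs,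
      Real.norm_eq_abs, abs_of_pos hd, abs_of_pos hγs]
  have e5 : ‖-((m:ℂ)*(d:ℂ)*f41)‖ = m*d*‖f41‖ := by
    rw [norm_neg, norm_mul, norm_mul, Complex.norm_real, Complex.norm_real,
      Real.norm_eq_abs, Real.norm_eq_abs, abs_of_pos hm, abs_of_pos hd]
  have e6 : ‖-(((J:ℂ)+(m:ℂ)*(d:ℂ)^2)*f42)‖ = (J+m*d^2)*‖f42‖ := by
    rw [norm_neg, norm_mul, hnJm]
  have hXb : ‖(α:ℂ)*u2 0‖ ≤ |lam| * ((m*d)*‖v 0‖) + |lam| * ((J+m*d^2)*‖v1 0‖)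
      + d*γ*‖v 0‖ + d*γs*‖v1 0‖ + m*d*‖f41‖ + (J+m*d^2)*‖f42‖ := by
    rw [hres4', ← e1, ← e2, ← e3, ← e4, ← e5, ← e6]
    exact norm_add6 _ _ _ _ _ _
  have hX2 : ‖(α:ℂ)*u2 0‖^2 ≤ 6*((m*d)^2*(|lam|^2*‖v 0‖^2)
      + (J+m*d^2)^2*(|lam|^2*‖v1 0‖^2) + d^2*γ^2*‖v 0‖^2 + d^2*γs^2*‖v1 0‖^2
      + (m*d)^2*‖f41‖^2 + (J+m*d^2)^2*‖f42‖^2) := by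
    have h1 := six_term _ _ _ _ _ _ _ (norm_nonneg ((α:ℂ)*u2 0)) hXb
    linarith only [h1]
  have hLa' : |lam|^2*‖v 0‖^2 ≤ 2*γ⁻¹*(lam^2*(Real.sqrt NUarg * Real.sqrt NFarg)) := by
    have h := mul_le_mul_of_nonneg_left haM (sq_nonneg |lam|)
    have e : |lam|^2 = lam^2 := sq_abs lam
    rw [e] at h
    have e2' : lam^2*(2*γ⁻¹*(Real.sqrt NUarg * Real.sqrt NFarg))
        = 2*γ⁻¹*(lam^2*(Real.sqrt NUarg * Real.sqrt NFarg)) := by ring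
    rw [e2'] at h
    rw [e]
    exact h
  have hLb' : |lam|^2*‖v1 0‖^2 ≤ 2*(d*γs)⁻¹*(lam^2*(Real.sqrt NUarg * Real.sqrt NFarg)) := by
    have h := mul_le_mul_of_nonneg_left hbM (sq_nonneg |lam|)
    have e : |lam|^2 = lam^2 := sq_abs lam
    rw [e] at h
    have e2' : lam^2*(2*(d*γs)⁻¹*(Real.sqrt NUarg * Real.sqrt NFarg))
        = 2*(d*γs)⁻¹*(lam^2*(Real.sqrt NUarg * Real.sqrt NFarg)) := by ring
    rw [e2'] at h
    rw [e]
    exact h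
  have hXfin : ‖(α:ℂ)*u2 0‖^2 ≤
      (6*((m*d)^2*(2*γ⁻¹) + (J+m*d^2)^2*(2*(d*γs)⁻¹)))*(lam^2*(Real.sqrt NUarg * Real.sqrt NFarg))
      + (6*(d^2*γ^2*(2*γ⁻¹) + d^2*γs^2*(2*(d*γs)⁻¹)))*(Real.sqrt NUarg * Real.sqrt NFarg)
      + (6*((m*d)^2*(2*m⁻¹+2*d^2*J⁻¹) + (J+m*d^2)^2*J⁻¹))*NFarg := by
    have q1 := mul_le_mul_of_nonneg_left hLa' (sq_nonneg (m*d))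
    have q2 := mul_le_mul_of_nonneg_left hLb' (sq_nonneg (J+m*d^2))
    have q3 := mul_le_mul_of_nonneg_left haM (by positivity : (0:ℝ) ≤ d^2*γ^2)
    have q4 := mul_le_mul_of_nonneg_left hbM (by positivity : (0:ℝ) ≤ d^2*γs^2)
    have q5 := mul_le_mul_of_nonneg_left p5 (sq_nonneg (m*d))
    have q6 := mul_le_mul_of_nonneg_left p6 (sq_nonneg (J+m*d^2))
    linarith only [hX2, q1, q2, q3, q4, q5, q6]
  have hXα : ‖(α:ℂ)*u2 0‖ = α*‖u2 0‖ := by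
    rw [norm_mul, Complex.norm_real, Real.norm_eq_abs, abs_of_pos hα]
  have hu20 : α*‖u2 0‖^2 ≤
      α⁻¹*((6*((m*d)^2*(2*γ⁻¹) + (J+m*d^2)^2*(2*(d*γs)⁻¹)))*(lam^2*(Real.sqrt NUarg * Real.sqrt NFarg))
      + (6*(d^2*γ^2*(2*γ⁻¹) + d^2*γs^2*(2*(d*γs)⁻¹)))*(Real.sqrt NUarg * Real.sqrt NFarg)
      + (6*((m*d)^2*(2*m⁻¹+2*d^2*J⁻¹) + (J+m*d^2)^2*J⁻¹))*NFarg) := by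
    rw [hXα, mul_pow] at hXfin
    have hdiv := mul_le_mul_of_nonneg_left hXfin (inv_nonneg.mpr hα.le)
    have e1' : α⁻¹*(α^2*‖u2 0‖^2) = α*‖u2 0‖^2 := by
      field_simp
    rw [e1'] at hdiv
    exact hdiv

  -- Step 9 : conclusion
  have t1 : 0 ≤ ((6*((m*d)^2*(2*γ⁻¹) + (J+m*d^2)^2*(2*(d*γs)⁻¹))
        + 6*((m*d)^2*(2*m⁻¹+2*d^2*J⁻¹) + (J+m*d^2)^2*J⁻¹))*α⁻¹)
      *(Real.sqrt NUarg * Real.sqrt NFarg) :=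
    mul_nonneg (by positivity) hM0
  have t2 : 0 ≤ (2*γ⁻¹ + (6*(d^2*γ^2*(2*γ⁻¹) + d^2*γs^2*(2*(d*γs)⁻¹))
        + 6*((m*d)^2*(2*m⁻¹+2*d^2*J⁻¹) + (J+m*d^2)^2*J⁻¹))*α⁻¹)
      *(lam^2*(Real.sqrt NUarg * Real.sqrt NFarg)) :=
    mul_nonneg (by positivity) (mul_nonneg (sq_nonneg _) hM0)
  have t3 : 0 ≤ (2*γ⁻¹ + (6*((m*d)^2*(2*γ⁻¹) + (J+m*d^2)^2*(2*(d*γs)⁻¹))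
        + 6*(d^2*γ^2*(2*γ⁻¹) + d^2*γs^2*(2*(d*γs)⁻¹)))*α⁻¹)*NFarg :=
    mul_nonneg (by positivity) hNF0
  have hfinal : ‖v 0‖^2 + α*‖u2 0‖^2 ≤
      (2*γ⁻¹ + (6*((m*d)^2*(2*γ⁻¹) + (J+m*d^2)^2*(2*(d*γs)⁻¹))
          + 6*(d^2*γ^2*(2*γ⁻¹) + d^2*γs^2*(2*(d*γs)⁻¹))
          + 6*((m*d)^2*(2*m⁻¹+2*d^2*J⁻¹) + (J+m*d^2)^2*J⁻¹))*α⁻¹)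
        *(1+lam^2)*(Real.sqrt NUarg)*(Real.sqrt NFarg)
      + (2*γ⁻¹ + (6*((m*d)^2*(2*γ⁻¹) + (J+m*d^2)^2*(2*(d*γs)⁻¹))
          + 6*(d^2*γ^2*(2*γ⁻¹) + d^2*γs^2*(2*(d*γs)⁻¹))
          + 6*((m*d)^2*(2*m⁻¹+2*d^2*J⁻¹) + (J+m*d^2)^2*J⁻¹))*α⁻¹)*NFarg := by
    linarith only [haM, hu20, t1, t2, t3]
  rw [Real.sq_sqrt hNF0]
  linarith only [hfinal]
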